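/- arXiv:1806.08192 — 3 statements merged into one kernel-verified Lean document; each statement's English description precedes it below -/
import Mathlib

section
/- Let 0 → C → A_i → B_i → 0 (i = 1, 2) be short exact sequences of finite abelian groups with inclusions ι_i : C → A_i and projections π_i : A_i → B_i, and let μ : B_1 → B_2 be an isomorphism. Suppose x_1, …, x_r ∈ A_1 together with ι_1(C) generate A_1, and y_1, …, y_r ∈ A_2 satisfy π_2(y_j) = μ(π_1(x_j)). If for every relation n_1 x_1 + ⋯ + n_r x_r + ι_1(c) = 0 generating the kernel of the natural map ℤ^r × C → A_1, there exist t_1, …, t_r ∈ C with n_1 y_1 + ⋯ + n_r y_r + ι_2(n_1 t_1 + ⋯ + n_r t_r) + ι_2(c) = 0 (with the same t_j working simultaneously for all generating relations), then there exists an isomorphism ψ : A_1 → A_2 with ψ ∘ ι_1 = ι_2 and π_2 ∘ ψ = μ ∘ π_1. -/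
open Finset

private def combo {G : Type} [AddCommGroup G] {C : Type} [AddCommGroup C] {r : ℕ}
    (z : Fin r → G) (ι : C →+ G) : (Fin r → ℤ) × C →+ G where
  toFun p := (∑ j, p.1 j • z j) + ι p.2
  map_zero' := by simp
  map_add' p q := by
    simp [add_smul, Finset.sum_add_distrib]
    abel

private lemma combo_apply {G : Type} [AddCommGroup G] {C : Type} [AddCommGroup C] {r : ℕ}
    (z : Fin r → G) (ι : C →+ G) (p : (Fin r → ℤ) × C) :
    combo z ι p = (∑ j, p.1 j • z j) + ι p.2 := rfl

private lemma card_of_ses {C A B : Type} [AddCommGroup C] [AddCommGroup A] [AddCommGroup B]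
    [Finite C] [Finite A] [Finite B]
    (ι : C →+ A) (π : A →+ B) (hι : Function.Injective ι) (hπ : Function.Surjective π)
    (hex : ∀ a : A, π a = 0 ↔ a ∈ Set.range ι) :
    Nat.card A = Nat.card C * Nat.card B := by
  have hker : π.ker = ι.range := by
    ext a
    simpa [AddMonoidHom.mem_ker, AddMonoidHom.mem_range, eq_comm] using hex a
  have h1 : Nat.card (A ⧸ π.ker) = Nat.card B :=
    Nat.card_congr (QuotientAddGroup.quotientKerEquivOfSurjective π hπ).toEquiv
  have h2 : Nat.card π.ker = Nat.card C := by
    rw [hker]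
    exact (Nat.card_congr (AddMonoidHom.ofInjective hι).toEquiv).symm
  have := AddSubgroup.card_eq_card_quotient_mul_card_addSubgroup π.ker
  rw [h1, h2, mul_comm] at this
  exact this

/-- Proposition 4.1 (sufficiency direction): given two extensions of finite abelian
groups by `C` and an isomorphism `μ` of the quotients, if the generating relations of
`A₁` can be simultaneously lifted (witnessed by `t : Fin r → C`), then there is an
isomorphism `ψ : A₁ → A₂` over `C` and compatible with `μ`. -/
theorem extension_isomorphism_of_lifting
    {C A₁ B₁ A₂ B₂ : Type} [AddCommGroup C] [AddCommGroup A₁] [AddCommGroup B₁]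
    [AddCommGroup A₂] [AddCommGroup B₂]
    [Finite C] [Finite A₁] [Finite B₁] [Finite A₂] [Finite B₂]
    (ι₁ : C →+ A₁) (π₁ : A₁ →+ B₁) (ι₂ : C →+ A₂) (π₂ : A₂ →+ B₂)
    -- the two rows are short exact sequences
    (hι₁ : Function.Injective ι₁) (hπ₁ : Function.Surjective π₁)
    (hex₁ : ∀ a : A₁, π₁ a = 0 ↔ a ∈ Set.range ι₁)
    (hι₂ : Function.Injective ι₂) (hπ₂ : Function.Surjective π₂)
    (hex₂ : ∀ a : A₂, π₂ a = 0 ↔ a ∈ Set.range ι₂)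
    (μ : B₁ ≃+ B₂)
    (r s : ℕ) (x : Fin r → A₁) (y : Fin r → A₂)
    -- `x₁, …, x_r` together with `ι₁(C)` generate `A₁`
    (hgen : AddSubgroup.closure (Set.range x ∪ Set.range ι₁) = ⊤)
    -- `π₂(y_j) = μ(π₁(x_j))`
    (hy : ∀ j : Fin r, π₂ (y j) = μ (π₁ (x j)))
    (n : Fin s → Fin r → ℤ) (c : Fin s → C)
    -- the `(n_i, c_i)` are relations:
    (hrel : ∀ i : Fin s, (∑ j, n i j • x j) + ι₁ (c i) = 0)
    -- and they generate the kernel of `τ : ℤ^r × C → A₁`: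
    (hker : ∀ (m : Fin r → ℤ) (c' : C), (∑ j, m j • x j) + ι₁ c' = 0 →
      (m, c') ∈ AddSubgroup.closure (Set.range fun i : Fin s => (n i, c i)))
    -- the lifting condition, with the same `t` for all generating relations:
    (hlift : ∃ t : Fin r → C, ∀ i : Fin s,
      (∑ j, n i j • y j) + ι₂ (∑ j, n i j • t j) + ι₂ (c i) = 0) :
    ∃ ψ : A₁ ≃+ A₂, (∀ cc : C, ψ (ι₁ cc) = ι₂ cc) ∧
      (∀ a : A₁, π₂ (ψ a) = μ (π₁ a)) := by
  obtain ⟨t, ht⟩ := hlift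
  set y' : Fin r → A₂ := fun j => y j + ι₂ (t j) with hy'def
  set σ₁ : (Fin r → ℤ) × C →+ A₁ := combo x ι₁ with hσ₁def
  set σ₂ : (Fin r → ℤ) × C →+ A₂ := combo y' ι₂ with hσ₂def
  -- surjectivity of σ₁
  have hσ₁surj : Function.Surjective σ₁ := by
    intro a
    have hmem : a ∈ AddSubgroup.closure (Set.range x ∪ Set.range ι₁) := by
      rw [hgen]; trivial
    have hle : AddSubgroup.closure (Set.range x ∪ Set.range ι₁) ≤ σ₁.range := by
      rw [AddSubgroup.closure_le]
      rintro a (⟨j, rfl⟩ | ⟨cc, rfl⟩)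
      · exact ⟨(Pi.single j 1, 0), by
          simp [hσ₁def, combo_apply, Pi.single_apply, ite_smul, Finset.sum_ite_eq']⟩
      · exact ⟨(0, cc), by simp [hσ₁def, combo_apply]⟩
    exact hle hmem
  -- kernel containment
  have hkerle : σ₁.ker ≤ σ₂.ker := by
    rintro ⟨m, c'⟩ hm
    have hm' : (∑ j, m j • x j) + ι₁ c' = 0 := hm
    have hgen2 : AddSubgroup.closure (Set.range fun i : Fin s => (n i, c i)) ≤ σ₂.ker := by
      rw [AddSubgroup.closure_le]
      rintro p ⟨i, rfl⟩
      have h := ht i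
      have : σ₂ (n i, c i) =
          (∑ j, n i j • y j) + ι₂ (∑ j, n i j • t j) + ι₂ (c i) := by
        simp [hσ₂def, combo_apply, hy'def, smul_add, Finset.sum_add_distrib, map_sum]
      simpa [AddMonoidHom.mem_ker, this] using h
    exact hgen2 (hker m c' hm')
  -- descend σ₂ through the quotient
  let e := QuotientAddGroup.quotientKerEquivOfSurjective σ₁ hσ₁surj
  let ψ₀ : A₁ →+ A₂ :=
    (QuotientAddGroup.lift σ₁.ker σ₂ hkerle).comp e.symm.toAddMonoidHom
  have hψ₀ : ∀ p, ψ₀ (σ₁ p) = σ₂ p := by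
    intro p
    have he : e.symm (σ₁ p) = QuotientAddGroup.mk p := by
      apply e.injective
      simp only [AddEquiv.apply_symm_apply]
      rfl
    simp [ψ₀, he]
  -- compatibility with ι
  have hcommι : ∀ cc : C, ψ₀ (ι₁ cc) = ι₂ cc := by
    intro cc
    have h1 : σ₁ (0, cc) = ι₁ cc := by simp [hσ₁def, combo_apply]
    have h2 : σ₂ (0, cc) = ι₂ cc := by simp [hσ₂def, combo_apply]
    rw [← h1, hψ₀, h2]
  -- compatibility with π, μ
  have hcommπ : ∀ a : A₁, π₂ (ψ₀ a) = μ (π₁ a) := by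
    intro a
    obtain ⟨p, rfl⟩ := hσ₁surj a
    rw [hψ₀]
    have hπι₂ : π₂ (ι₂ p.2) = 0 := (hex₂ _).2 ⟨p.2, rfl⟩
    have hπι₁ : π₁ (ι₁ p.2) = 0 := (hex₁ _).2 ⟨p.2, rfl⟩
    have hπy' : ∀ j, π₂ (y' j) = μ (π₁ (x j)) := by
      intro j
      have : π₂ (ι₂ (t j)) = 0 := (hex₂ _).2 ⟨t j, rfl⟩
      simp [hy'def, this, hy j]
    simp [hσ₁def, hσ₂def, combo_apply, map_sum, map_zsmul, hπι₂, hπι₁, hπy']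
  -- injectivity
  have hinj : Function.Injective ψ₀ := by
    rw [injective_iff_map_eq_zero]
    intro a ha
    have h1 : μ (π₁ a) = 0 := by rw [← hcommπ a, ha, map_zero]
    have h2 : π₁ a = 0 := μ.injective (by simp [h1])
    obtain ⟨cc, rfl⟩ := (hex₁ a).1 h2
    have : ι₂ cc = 0 := by rw [← hcommι cc, ha]
    have hcc : cc = 0 := hι₂ (by rw [this, map_zero])
    rw [hcc, map_zero]
  -- cardinality count
  have hcard : Nat.card A₁ = Nat.card A₂ := by
    rw [card_of_ses ι₁ π₁ hι₁ hπ₁ hex₁, card_of_ses ι₂ π₂ hι₂ hπ₂ hex₂,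
      Nat.card_congr μ.toEquiv]
  have hbij : Function.Bijective ψ₀ :=
    (Nat.bijective_iff_injective_and_card ψ₀).2 ⟨hinj, hcard⟩
  refine ⟨AddEquiv.ofBijective ψ₀ hbij, ?_, ?_⟩
  · intro cc; exact hcommι cc
  · intro a; exact hcommπ a
end

section
/- Let C, A₁, A₂ be finite abelian groups with injective homomorphisms ι₁ : C → A₁ and ι₂ : C → A₂. There exists an isomorphism ψ : A₁ → A₂ with ψ ∘ ι₁ = ι₂ if and only if for every prime p there exists an isomorphism ψ_p : A₁[p^∞] → A₂[p^∞] of the p-primary components with ψ_p ∘ ι₁|_{C[p^∞]} = ι₂|_{C[p^∞]}. -/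
open Finset

section helpers

variable {G : Type} [AddCommGroup G]

private lemma zsmul_eq_zero_of_dvd' {y : G} {e : ℤ} (h : (addOrderOf y : ℤ) ∣ e) :
    e • y = 0 :=
  addOrderOf_dvd_iff_zsmul_eq_zero.mp h

private lemma zsmul_eq_self_of_dvd' {y : G} {e : ℤ} (h : (addOrderOf y : ℤ) ∣ e - 1) :
    e • y = y := by
  have h0 : (e - 1) • y = 0 := addOrderOf_dvd_iff_zsmul_eq_zero.mp h
  rw [sub_zsmul, one_zsmul, ← sub_eq_add_neg] at h0
  exact sub_eq_zero.mp h0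

private lemma primary_mem_of_dvd {n : ℕ} (hsm : ∀ x : G, n • x = 0) {p : ℕ} [Fact p.Prime]
    {e : ℤ} (he : (n : ℤ) ∣ ((p ^ n.factorization p : ℕ) : ℤ) * e) (x : G) :
    e • x ∈ AddCommGroup.primaryComponent G p := by
  obtain ⟨k, hk⟩ := he
  have h0 : (p ^ n.factorization p) • (e • x) = 0 := by
    have : ((p ^ n.factorization p : ℕ) : ℤ) • (e • x) = 0 := by
      rw [smul_smul, hk, mul_comm, mul_smul, natCast_zsmul, hsm x, smul_zero]
    rwa [natCast_zsmul] at this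
  have hdvd : addOrderOf (e • x) ∣ p ^ n.factorization p :=
    addOrderOf_dvd_of_nsmul_eq_zero h0
  obtain ⟨m, _, hm⟩ := (Nat.dvd_prime_pow (Fact.out : p.Prime)).mp hdvd
  exact AddCommGroup.mem_primaryComponent_iff_addOrderOf.mpr ⟨m, hm⟩

private lemma order_dvd_ordProj {n : ℕ} (hn : n ≠ 0) (hsm : ∀ x : G, n • x = 0) {p : ℕ}
    [hp : Fact p.Prime] {y : G} (hy : y ∈ AddCommGroup.primaryComponent G p) :
    addOrderOf y ∣ p ^ n.factorization p := by
  obtain ⟨m, hm⟩ := AddCommGroup.mem_primaryComponent_iff_addOrderOf.mp hy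
  have hdvd : p ^ m ∣ n := hm ▸ addOrderOf_dvd_of_nsmul_eq_zero (hsm y)
  rw [hm]
  exact pow_dvd_pow p ((Nat.Prime.pow_dvd_iff_le_factorization hp.out hn).mp hdvd)

private lemma component_smul {n : ℕ} (hn : n ≠ 0) (hsm : ∀ x : G, n • x = 0)
    {e : ℕ → ℤ}
    (he2 : ∀ p ∈ n.primeFactors, ((p ^ n.factorization p : ℕ) : ℤ) ∣ e p - 1)
    (he3 : ∀ p ∈ n.primeFactors, ∀ q ∈ n.primeFactors, p ≠ q →
      ((p ^ n.factorization p : ℕ) : ℤ) ∣ e q)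
    (q : {p : ℕ // p ∈ n.primeFactors})
    (y : {p : ℕ // p ∈ n.primeFactors} → G)
    (hy : ∀ p, y p ∈ AddCommGroup.primaryComponent G p.1) :
    e q.1 • ∑ p ∈ n.primeFactors.attach, y p = y q := by
  rw [Finset.smul_sum]
  rw [Finset.sum_eq_single_of_mem q (Finset.mem_attach _ _) ?_]
  · haveI : Fact q.1.Prime := Fact.mk (Nat.prime_of_mem_primeFactors q.2)
    refine zsmul_eq_self_of_dvd' (dvd_trans ?_ (he2 q.1 q.2))
    exact_mod_cast Int.natCast_dvd_natCast.mpr (order_dvd_ordProj hn hsm (hy q))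
  · intro p _ hpq
    haveI : Fact p.1.Prime := Fact.mk (Nat.prime_of_mem_primeFactors p.2)
    refine zsmul_eq_zero_of_dvd' (dvd_trans ?_
      (he3 p.1 p.2 q.1 q.2 (fun h => hpq (Subtype.ext h))))
    exact_mod_cast Int.natCast_dvd_natCast.mpr (order_dvd_ordProj hn hsm (hy p))

end helpers

private lemma exists_idempotents (n : ℕ) (hn : n ≠ 0) :
    ∃ e : ℕ → ℤ,
      (∀ p ∈ n.primeFactors, (n : ℤ) ∣ ((p ^ n.factorization p : ℕ) : ℤ) * e p) ∧
      (∀ p ∈ n.primeFactors, ((p ^ n.factorization p : ℕ) : ℤ) ∣ e p - 1) ∧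
      (∀ p ∈ n.primeFactors, ∀ q ∈ n.primeFactors, p ≠ q →
        ((p ^ n.factorization p : ℕ) : ℤ) ∣ e q) ∧
      (n : ℤ) ∣ (∑ p ∈ n.primeFactors, e p) - 1 := by
  have key : ∀ p, p ∈ n.primeFactors → ∃ ep : ℤ,
      (n : ℤ) ∣ ((p ^ n.factorization p : ℕ) : ℤ) * ep ∧
      ((p ^ n.factorization p : ℕ) : ℤ) ∣ ep - 1 ∧
      ((ordCompl[p] n : ℕ) : ℤ) ∣ ep := by
    intro p hp
    have hpp := Nat.prime_of_mem_primeFactors hp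
    have hco : Nat.Coprime (p ^ n.factorization p) (ordCompl[p] n) :=
      (Nat.coprime_ordCompl hpp hn).pow_left _
    have hiso : IsCoprime ((p ^ n.factorization p : ℕ) : ℤ) ((ordCompl[p] n : ℕ) : ℤ) := by
      rw [Nat.isCoprime_iff_coprime]; exact hco
    obtain ⟨u, w, huv⟩ := hiso
    have hab : ((p ^ n.factorization p) * ordCompl[p] n : ℕ) = n :=
      Nat.ordProj_mul_ordCompl_eq_self n p
    have hab' : ((p ^ n.factorization p : ℕ) : ℤ) * ((ordCompl[p] n : ℕ) : ℤ) = (n : ℤ) := by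
      exact_mod_cast congrArg (Nat.cast : ℕ → ℤ) hab
    exact ⟨w * ((ordCompl[p] n : ℕ) : ℤ), ⟨w, by linear_combination w * hab'⟩,
      ⟨-u, by linear_combination huv⟩, dvd_mul_left _ _⟩
  choose! e h1 h2 h3 using key
  have h3prime : ∀ p ∈ n.primeFactors, ∀ q ∈ n.primeFactors, p ≠ q →
      ((p ^ n.factorization p : ℕ) : ℤ) ∣ e q := by
    intro p hp q hq hpq
    refine dvd_trans ?_ (h3 q hq)
    have hd : (p ^ n.factorization p : ℕ) ∣ ordCompl[q] n := by
      have h1 : (p ^ n.factorization p : ℕ) ∣ n := Nat.ordProj_dvd n p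
      have hco : Nat.Coprime (p ^ n.factorization p) (q ^ n.factorization q) :=
        ((Nat.coprime_primes (Nat.prime_of_mem_primeFactors hp)
          (Nat.prime_of_mem_primeFactors hq)).mpr hpq).pow _ _
      have h2 : (p ^ n.factorization p : ℕ) ∣ (q ^ n.factorization q) * ordCompl[q] n := by
        rwa [Nat.ordProj_mul_ordCompl_eq_self]
      exact (Nat.Coprime.dvd_of_dvd_mul_left hco h2)
    exact_mod_cast Int.natCast_dvd_natCast.mpr hd
  refine ⟨e, h1, h2, h3prime, ?_⟩
  have hprod : ∏ p ∈ n.primeFactors, ((p ^ n.factorization p : ℕ) : ℤ) = (n : ℤ) := by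
    rw [← Nat.cast_prod]
    norm_cast
    simpa [Finsupp.prod, Nat.support_factorization] using
      Nat.factorization_prod_pow_eq_self hn
  rw [← hprod]
  refine Finset.prod_dvd_of_coprime ?_ ?_
  · intro p hp q hq hpq
    simp only [Function.onFun]
    rw [Nat.isCoprime_iff_coprime]
    exact (((Nat.coprime_primes (Nat.prime_of_mem_primeFactors hp)
      (Nat.prime_of_mem_primeFactors hq)).mpr hpq).pow _ _ :)
  · intro q hq
    have hsum : (∑ p ∈ n.primeFactors, e p) - 1 = (e q - 1) + ∑ p ∈ n.primeFactors.erase q, e p := by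
      rw [← Finset.add_sum_erase _ _ hq]; ring
    rw [hsum]
    refine dvd_add (h2 q hq) (Finset.dvd_sum ?_)
    intro p hp
    exact h3prime q hq p (Finset.mem_of_mem_erase hp) (Finset.ne_of_mem_erase hp).symm

/-- Two embeddings `ι₁ : C → A₁`, `ι₂ : C → A₂` of finite abelian groups are
related by an isomorphism `ψ : A₁ ≃ A₂` with `ψ ∘ ι₁ = ι₂` if and only if, for
every prime `p`, the induced embeddings of `p`-primary components are related by
an isomorphism `A₁[p^∞] ≃ A₂[p^∞]`. -/
theorem extension_iso_iff_primary_components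
    {C A₁ A₂ : Type} [AddCommGroup C] [AddCommGroup A₁] [AddCommGroup A₂]
    [Finite C] [Finite A₁] [Finite A₂]
    (ι₁ : C →+ A₁) (ι₂ : C →+ A₂)
    (hι₁ : Function.Injective ι₁) (hι₂ : Function.Injective ι₂) :
    (∃ ψ : A₁ ≃+ A₂, ∀ c : C, ψ (ι₁ c) = ι₂ c) ↔
      (∀ (p : ℕ) [Fact p.Prime],
        ∃ ψp : AddCommGroup.primaryComponent A₁ p ≃+ AddCommGroup.primaryComponent A₂ p,
          ∀ (c : C), c ∈ AddCommGroup.primaryComponent C p →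
            ∀ (h₁ : ι₁ c ∈ AddCommGroup.primaryComponent A₁ p),
              (ψp ⟨ι₁ c, h₁⟩ : A₂) = ι₂ c) := by
  constructor
  · rintro ⟨ψ, hψ⟩ p hp
    have key : ∀ x : A₁, x ∈ AddCommGroup.primaryComponent A₁ p →
        ψ x ∈ AddCommGroup.primaryComponent A₂ p := by
      rintro x ⟨m, hm⟩
      exact ⟨m, by rw [← map_nsmul, hm, map_zero]⟩
    have key' : ∀ y : A₂, y ∈ AddCommGroup.primaryComponent A₂ p →
        ψ.symm y ∈ AddCommGroup.primaryComponent A₁ p := by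
      rintro y ⟨m, hm⟩
      exact ⟨m, by rw [← map_nsmul, hm, map_zero]⟩
    exact ⟨{ toFun := fun x => ⟨ψ x, key x x.2⟩,
             invFun := fun y => ⟨ψ.symm y, key' y y.2⟩,
             left_inv := fun x => Subtype.ext (ψ.symm_apply_apply x),
             right_inv := fun y => Subtype.ext (ψ.apply_symm_apply y),
             map_add' := fun x y => Subtype.ext (map_add ψ x.1 y.1) }, fun c _ h₁ => hψ c⟩
  · intro h
    classical
    set n := Nat.card C * Nat.card A₁ * Nat.card A₂ with hndef
    have hn : n ≠ 0 := by
      have h1 : 0 < Nat.card C := Nat.card_pos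
      have h2 : 0 < Nat.card A₁ := Nat.card_pos
      have h3 : 0 < Nat.card A₂ := Nat.card_pos
      positivity
    have hsmC : ∀ x : C, n • x = 0 := fun x => addOrderOf_dvd_iff_nsmul_eq_zero.mp
      (dvd_trans (addOrderOf_dvd_natCard x) ⟨Nat.card A₁ * Nat.card A₂, by rw [hndef]; ring⟩)
    have hsmA₁ : ∀ x : A₁, n • x = 0 := fun x => addOrderOf_dvd_iff_nsmul_eq_zero.mp
      (dvd_trans (addOrderOf_dvd_natCard x) ⟨Nat.card C * Nat.card A₂, by rw [hndef]; ring⟩)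
    have hsmA₂ : ∀ x : A₂, n • x = 0 := fun x => addOrderOf_dvd_iff_nsmul_eq_zero.mp
      (dvd_trans (addOrderOf_dvd_natCard x) ⟨Nat.card C * Nat.card A₁, by rw [hndef]; ring⟩)
    obtain ⟨e, he1, he2, he3, he4⟩ := exists_idempotents n hn
    choose Ψ hΨ using fun (p : {q : ℕ // q ∈ n.primeFactors}) =>
      @h p.1 (Fact.mk (Nat.prime_of_mem_primeFactors p.2))
    have memA₁ : ∀ (p : {q : ℕ // q ∈ n.primeFactors}) (x : A₁),
        e p.1 • x ∈ AddCommGroup.primaryComponent A₁ p.1 := fun p x => by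
      haveI := Fact.mk (Nat.prime_of_mem_primeFactors p.2)
      exact primary_mem_of_dvd hsmA₁ (he1 p.1 p.2) x
    have memA₂ : ∀ (p : {q : ℕ // q ∈ n.primeFactors}) (y : A₂),
        e p.1 • y ∈ AddCommGroup.primaryComponent A₂ p.1 := fun p y => by
      haveI := Fact.mk (Nat.prime_of_mem_primeFactors p.2)
      exact primary_mem_of_dvd hsmA₂ (he1 p.1 p.2) y
    have memC : ∀ (p : {q : ℕ // q ∈ n.primeFactors}) (c : C),
        e p.1 • c ∈ AddCommGroup.primaryComponent C p.1 := fun p c => by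
      haveI := Fact.mk (Nat.prime_of_mem_primeFactors p.2)
      exact primary_mem_of_dvd hsmC (he1 p.1 p.2) c
    have sumsmul : ∀ {G : Type} [AddCommGroup G], (∀ x : G, n • x = 0) → ∀ (x : G),
        ∑ p ∈ n.primeFactors.attach, e p.1 • x = x := by
      intro G _ hsm x
      rw [← Finset.sum_smul, Finset.sum_attach _ e]
      refine zsmul_eq_self_of_dvd' (dvd_trans ?_ he4)
      exact_mod_cast Int.natCast_dvd_natCast.mpr (addOrderOf_dvd_of_nsmul_eq_zero (hsm x))
    have compF : ∀ (x : A₁) (q : {p : ℕ // p ∈ n.primeFactors}),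
        e q.1 • (∑ p ∈ n.primeFactors.attach,
            ((Ψ p ⟨e p.1 • x, memA₁ p x⟩ : _) : A₂))
          = ((Ψ q ⟨e q.1 • x, memA₁ q x⟩ : _) : A₂) := fun x q =>
      component_smul hn hsmA₂ he2 he3 q _ (fun p => (Ψ p ⟨e p.1 • x, memA₁ p x⟩).2)
    have compG : ∀ (y : A₂) (q : {p : ℕ // p ∈ n.primeFactors}),
        e q.1 • (∑ p ∈ n.primeFactors.attach,
            (((Ψ p).symm ⟨e p.1 • y, memA₂ p y⟩ : _) : A₁))
          = (((Ψ q).symm ⟨e q.1 • y, memA₂ q y⟩ : _) : A₁) := fun y q =>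
      component_smul hn hsmA₁ he2 he3 q _ (fun p => ((Ψ p).symm ⟨e p.1 • y, memA₂ p y⟩).2)
    refine ⟨{ toFun := fun x => ∑ p ∈ n.primeFactors.attach,
                ((Ψ p ⟨e p.1 • x, memA₁ p x⟩ : _) : A₂),
              invFun := fun y => ∑ p ∈ n.primeFactors.attach,
                (((Ψ p).symm ⟨e p.1 • y, memA₂ p y⟩ : _) : A₁),
              left_inv := ?_, right_inv := ?_, map_add' := ?_ }, ?_⟩
    · intro x
      dsimp only
      have step : ∀ q : {p : ℕ // p ∈ n.primeFactors},
          (((Ψ q).symm ⟨e q.1 • (∑ p ∈ n.primeFactors.attach,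
              ((Ψ p ⟨e p.1 • x, memA₁ p x⟩ : _) : A₂)),
            memA₂ q _⟩ : _) : A₁) = e q.1 • x := by
        intro q
        have hx : (⟨e q.1 • (∑ p ∈ n.primeFactors.attach,
              ((Ψ p ⟨e p.1 • x, memA₁ p x⟩ : _) : A₂)), memA₂ q _⟩ :
            AddCommGroup.primaryComponent A₂ q.1)
            = Ψ q ⟨e q.1 • x, memA₁ q x⟩ := Subtype.ext (compF x q)
        rw [hx, AddEquiv.symm_apply_apply]
      rw [Finset.sum_congr rfl (fun q _ => step q)]
      exact sumsmul hsmA₁ x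
    · intro y
      dsimp only
      have step : ∀ q : {p : ℕ // p ∈ n.primeFactors},
          ((Ψ q ⟨e q.1 • (∑ p ∈ n.primeFactors.attach,
              (((Ψ p).symm ⟨e p.1 • y, memA₂ p y⟩ : _) : A₁)),
            memA₁ q _⟩ : _) : A₂) = e q.1 • y := by
        intro q
        have hx : (⟨e q.1 • (∑ p ∈ n.primeFactors.attach,
              (((Ψ p).symm ⟨e p.1 • y, memA₂ p y⟩ : _) : A₁)), memA₁ q _⟩ :
            AddCommGroup.primaryComponent A₁ q.1)
            = (Ψ q).symm ⟨e q.1 • y, memA₂ q y⟩ := Subtype.ext (compG y q)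
        rw [hx, AddEquiv.apply_symm_apply]
      rw [Finset.sum_congr rfl (fun q _ => step q)]
      exact sumsmul hsmA₂ y
    · intro x y
      rw [← Finset.sum_add_distrib]
      refine Finset.sum_congr rfl fun p _ => ?_
      have hx : (⟨e p.1 • (x + y), memA₁ p (x + y)⟩ :
          AddCommGroup.primaryComponent A₁ p.1)
          = ⟨e p.1 • x, memA₁ p x⟩ + ⟨e p.1 • y, memA₁ p y⟩ :=
        Subtype.ext (by simp [smul_add])
      rw [hx, map_add]
      rfl
    · intro c
      show (∑ p ∈ n.primeFactors.attach,
        ((Ψ p ⟨e p.1 • ι₁ c, memA₁ p (ι₁ c)⟩ : _) : A₂)) = ι₂ c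
      have step : ∀ p : {q : ℕ // q ∈ n.primeFactors},
          ((Ψ p ⟨e p.1 • ι₁ c, memA₁ p (ι₁ c)⟩ : _) : A₂) = e p.1 • ι₂ c := by
        intro p
        haveI := Fact.mk (Nat.prime_of_mem_primeFactors p.2)
        have h₁ : ι₁ (e p.1 • c) ∈ AddCommGroup.primaryComponent A₁ p.1 := by
          rw [map_zsmul]; exact memA₁ p (ι₁ c)
        have heq : (⟨e p.1 • ι₁ c, memA₁ p (ι₁ c)⟩ :
            AddCommGroup.primaryComponent A₁ p.1)
            = ⟨ι₁ (e p.1 • c), h₁⟩ := Subtype.ext (map_zsmul ι₁ (e p.1) c).symm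
        rw [heq, hΨ p (e p.1 • c) (memC p c) h₁, map_zsmul]
      rw [Finset.sum_congr rfl (fun p _ => step p)]
      exact sumsmul hsmA₂ (ι₂ c)
end

section
/- Let G be a finite abelian group isomorphic to ℤ/d₁ℤ × ⋯ × ℤ/d_kℤ with d₁ | d₂ | ⋯ | d_k and d_i > 1 for all i, and suppose G embeds into (ℚ/ℤ)^g × (ℤ/2ℤ)^{m−1}. Then either k ≤ g, or g < k ≤ g + m − 1 and d₁ = ⋯ = d_{k−g} = 2. -/
lemma addCircle_torsion_surj (n : ℕ) (hn : 0 < n) :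
    ∃ ψ : Fin n → {u : AddCircle (1 : ℚ) // n • u = 0}, Function.Surjective ψ := by
  have hn' : (n : ℚ) ≠ 0 := Nat.cast_ne_zero.mpr hn.ne'
  refine ⟨fun j => ⟨((j : ℚ) / (n : ℚ) : ℚ), ?_⟩, ?_⟩
  · rw [← AddCircle.coe_nsmul, AddCircle.coe_eq_zero_iff]
    exact ⟨(j : ℤ), by rw [zsmul_eq_mul, nsmul_eq_mul]; push_cast; field_simp⟩
  · rintro ⟨u, hu⟩
    induction u using QuotientAddGroup.induction_on with
    | H x =>
      rw [← AddCircle.coe_nsmul, AddCircle.coe_eq_zero_iff] at hu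
      obtain ⟨z, hz⟩ := hu
      have hzn : z % n ≥ 0 := Int.emod_nonneg z (by exact_mod_cast hn.ne')
      have hjlt : (z % n).toNat < n := by
        have := Int.emod_lt_of_pos z (b := n) (by exact_mod_cast hn)
        omega
      refine ⟨⟨(z % n).toNat, hjlt⟩, Subtype.ext ?_⟩
      show (↑((((z % n).toNat : ℚ)) / (n : ℚ)) : AddCircle (1:ℚ)) = ↑x
      have hx : x = (z : ℚ) / n := by
        rw [zsmul_eq_mul, nsmul_eq_mul] at hz
        field_simp at hz ⊢
        linarith
      rw [QuotientAddGroup.eq]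
      refine AddSubgroup.mem_zmultiples_iff.mpr ⟨z / n, ?_⟩
      have : ((z % n).toNat : ℚ) = (z : ℚ) - (n : ℚ) * ((z / n : ℤ) : ℚ) := by
        have h1 : ((z % n).toNat : ℤ) = z % n := Int.toNat_of_nonneg hzn
        have h2 : (n : ℤ) * (z / n) + z % n = z := Int.mul_ediv_add_emod z n
        have h2q := congrArg (Int.cast : ℤ → ℚ) h2
        have h1q : (((z % (n:ℤ)).toNat : ℚ)) = ((z % (n:ℤ) : ℤ) : ℚ) := by
          exact_mod_cast congrArg (Int.cast : ℤ → ℚ) h1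
        push_cast at h2q
        rw [h1q]
        push_cast
        linarith
      rw [hx, this, zsmul_eq_mul]
      push_cast
      field_simp
      ring

def zphi (d q : ℕ) (x : Fin q) : ZMod d := (((x : ℕ) * (d / q) : ℕ) : ZMod d)

lemma zphi_tor {d q : ℕ} (hdvd : q ∣ d) (x : Fin q) : q • zphi d q x = 0 := by
  unfold zphi
  rw [nsmul_eq_mul]
  rw [show ((((x : ℕ) * (d / q) : ℕ) : ZMod d)) = (((x : ℕ) : ZMod d) * ((d / q : ℕ) : ZMod d)) by push_cast; ring]
  rw [← mul_assoc, mul_comm (q : ZMod d), mul_assoc]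
  rw [show ((q : ZMod d) * ((d / q : ℕ) : ZMod d)) = ((q * (d / q) : ℕ) : ZMod d) by push_cast; ring]
  rw [Nat.mul_div_cancel' hdvd, ZMod.natCast_self, mul_zero]

lemma zphi_inj {d q : ℕ} (hq : 0 < q) (hdvd : q ∣ d) (hd : 0 < d) :
    Function.Injective (zphi d q) := by
  intro x y h
  have hdq : 0 < d / q := Nat.div_pos (Nat.le_of_dvd hd hdvd) hq
  have hx : (x : ℕ) * (d / q) < d := by
    calc (x : ℕ) * (d / q) < q * (d / q) := by
          exact (Nat.mul_lt_mul_right hdq).mpr x.2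
      _ = d := Nat.mul_div_cancel' hdvd
  have hy : (y : ℕ) * (d / q) < d := by
    calc (y : ℕ) * (d / q) < q * (d / q) := by
          exact (Nat.mul_lt_mul_right hdq).mpr y.2
      _ = d := Nat.mul_div_cancel' hdvd
  unfold zphi at h
  have := congrArg (ZMod.val (n := d)) h
  rw [ZMod.val_natCast_of_lt hx, ZMod.val_natCast_of_lt hy] at this
  exact Fin.ext (Nat.eq_of_mul_eq_mul_right hdq this)

lemma zphi_div {d q : ℕ} (hq : 0 < q) (hdvd : q * q ∣ d) (x : Fin q) :
    ∃ y : ZMod d, zphi d q x = q • y := by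
  refine ⟨(((x : ℕ) * (d / (q * q)) : ℕ) : ZMod d), ?_⟩
  unfold zphi
  rw [nsmul_eq_mul]
  rw [show (((x : ℕ) * (d / (q * q)) : ℕ) : ZMod d) = (((x : ℕ) : ZMod d) * ((d / (q * q) : ℕ) : ZMod d)) by push_cast; ring]
  rw [show ((x : ℕ) * (d / q) : ℕ) = (q * ((x : ℕ) * (d / (q * q)))) by
    rw [← mul_assoc, mul_comm q, mul_assoc]
    congr 1
    rw [← Nat.div_div_eq_div_mul]
    exact (Nat.mul_div_cancel' (Nat.dvd_div_of_mul_dvd hdvd)).symm]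
  push_cast
  ring

lemma gside {G : Type} [AddCommGroup G] {k : ℕ} {d : Fin k → ℕ} (hd1 : ∀ i, 1 < d i)
    (e : G ≃+ ∀ i : Fin k, ZMod (d i)) (q t : ℕ) (hq : 0 < q)
    (hqd : ∀ j : Fin k, t ≤ (j : ℕ) → q ∣ d j) :
    ∃ Φ : (Fin (k - t) → Fin q) → G, Function.Injective Φ ∧ (∀ v, q • Φ v = 0) ∧
      ((∀ j : Fin k, t ≤ (j : ℕ) → q * q ∣ d j) → ∀ v, ∃ y, Φ v = q • y) := by
  set w : (Fin (k - t) → Fin q) → ∀ j : Fin k, ZMod (d j) := fun v j =>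
    if h : t ≤ (j : ℕ) then zphi (d j) q (v ⟨(j : ℕ) - t, by have := j.2; omega⟩) else 0 with hw
  refine ⟨fun v => e.symm (w v), ?_, ?_, ?_⟩
  · intro v v' hvv
    have hww : w v = w v' := e.symm.injective hvv
    funext r
    have hrk : t + (r : ℕ) < k := by have := r.2; omega
    let j : Fin k := ⟨t + (r : ℕ), hrk⟩
    have hj : t ≤ (j : ℕ) := Nat.le_add_right t r
    have := congrFun hww j
    rw [hw] at this
    simp only [dif_pos hj] at this
    have hidx : (⟨(j : ℕ) - t, by have := j.2; omega⟩ : Fin (k - t)) = r := by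
      apply Fin.ext
      show (t + (r : ℕ)) - t = (r : ℕ)
      omega
    rw [hidx] at this
    exact zphi_inj hq (hqd j hj) (lt_trans Nat.zero_lt_one (hd1 j)) this
  · intro v
    rw [← map_nsmul]
    have : q • (w v) = 0 := by
      funext j
      rw [Pi.smul_apply, hw]
      by_cases h : t ≤ (j : ℕ)
      · simp only [dif_pos h]
        exact zphi_tor (hqd j h) _
      · simp only [dif_neg h, smul_zero]
        rfl
    rw [this, map_zero]
  · intro h4 v
    have : ∀ j : Fin k, ∃ y : ZMod (d j), w v j = q • y := by
      intro j
      by_cases h : t ≤ (j : ℕ)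
      · rw [hw]; simp only [dif_pos h]
        exact zphi_div hq (h4 j h) _
      · exact ⟨0, by rw [hw]; simp only [dif_neg h, smul_zero]⟩
    choose Y hY using this
    refine ⟨e.symm Y, ?_⟩
    rw [← map_nsmul]
    show e.symm (w v) = e.symm (q • Y)
    congr 1
    funext j
    rw [Pi.smul_apply, ← hY j]

lemma zmod2_odd {q : ℕ} (hq : Odd q) (c : ZMod 2) (h : q • c = 0) : c = 0 := by
  obtain ⟨r, hr⟩ := hq
  rw [hr, add_nsmul, one_nsmul, two_mul, add_nsmul] at h
  rwa [CharTwo.add_self_eq_zero, zero_add] at h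

lemma count_le {G : Type} [AddCommGroup G] {k g m : ℕ} {d : Fin k → ℕ}
    (hd1 : ∀ i, 1 < d i)
    (e : G ≃+ ∀ i : Fin k, ZMod (d i))
    (f : G →+ (Fin g → AddCircle (1 : ℚ)) × (Fin (m - 1) → ZMod 2))
    (hf : Function.Injective f)
    (q t : ℕ) (hq : 1 < q) (hqd : ∀ j : Fin k, t ≤ (j : ℕ) → q ∣ d j) :
    (Odd q → k - t ≤ g) ∧ (k - t ≤ g + (m - 1)) ∧
      (q = 2 → (∀ j : Fin k, t ≤ (j : ℕ) → q * q ∣ d j) → k - t ≤ g) := by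
  obtain ⟨Φ, hΦinj, hΦtor, hΦdiv⟩ := gside hd1 e q t (by omega) hqd
  obtain ⟨ψ, hψ⟩ := addCircle_torsion_surj q (by omega)
  have htor : ∀ v (i : Fin g), q • (f (Φ v)).1 i = 0 := by
    intro v i
    have h1 : q • f (Φ v) = 0 := by rw [← map_nsmul, hΦtor v, map_zero]
    have h2 : (q • f (Φ v)).1 i = 0 := by rw [h1]; rfl
    rwa [Prod.smul_fst, Pi.smul_apply] at h2
  refine ⟨?_, ?_, ?_⟩
  · -- odd case
    intro hodd
    have hsnd : ∀ v, (f (Φ v)).2 = 0 := by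
      intro v
      funext i
      have h1 : q • f (Φ v) = 0 := by rw [← map_nsmul, hΦtor v, map_zero]
      have h2 : (q • f (Φ v)).2 i = 0 := by rw [h1]; rfl
      rw [Prod.smul_snd, Pi.smul_apply] at h2
      exact zmod2_odd hodd _ h2
    have hinj : Function.Injective
        (fun v : Fin (k - t) → Fin q =>
          (fun i => Function.surjInv hψ ⟨(f (Φ v)).1 i, htor v i⟩ : Fin g → Fin q)) := by
      intro v v' h
      apply hΦinj; apply hf
      have h1 : (f (Φ v)).1 = (f (Φ v')).1 := by
        funext i
        have := congrFun h i
        have := Function.injective_surjInv hψ this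
        exact congrArg Subtype.val this
      exact Prod.ext h1 ((hsnd v).trans (hsnd v').symm)
    have := Fintype.card_le_of_injective _ hinj
    rw [Fintype.card_fun, Fintype.card_fun, Fintype.card_fin, Fintype.card_fin,
      Fintype.card_fin] at this
    exact (Nat.pow_le_pow_iff_right hq).mp this
  · -- general bound
    have hinj : Function.Injective
        (fun v : Fin (k - t) → Fin q =>
          ((fun i => Function.surjInv hψ ⟨(f (Φ v)).1 i, htor v i⟩ : Fin g → Fin q),
            (f (Φ v)).2)) := by
      intro v v' h
      apply hΦinj; apply hf
      simp only at h
      have h2 : (f (Φ v)).2 = (f (Φ v')).2 := congrArg (fun p => p.2) h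
      have h1 : (f (Φ v)).1 = (f (Φ v')).1 := by
        funext i
        have := congrFun (congrArg (fun p => p.1) h) i
        have := Function.injective_surjInv hψ this
        exact congrArg Subtype.val this
      exact Prod.ext h1 h2
    have := Fintype.card_le_of_injective _ hinj
    rw [Fintype.card_prod, Fintype.card_fun, Fintype.card_fun, Fintype.card_fun] at this
    simp only [Fintype.card_fin, ZMod.card] at this
    have h2 : q ^ (k - t) ≤ q ^ (g + (m - 1)) := by
      calc q ^ (k - t) ≤ q ^ g * 2 ^ (m - 1) := this
        _ ≤ q ^ g * q ^ (m - 1) :=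
            Nat.mul_le_mul_left _ (Nat.pow_le_pow_left (by omega) _)
        _ = q ^ (g + (m - 1)) := (pow_add q g (m - 1)).symm
    exact (Nat.pow_le_pow_iff_right hq).mp h2
  · -- divisible-by-q² case (q = 2)
    intro hq2 h4
    have hsnd : ∀ v, (f (Φ v)).2 = 0 := by
      intro v
      obtain ⟨y, hy⟩ := hΦdiv h4 v
      funext i
      have : (f (Φ v)).2 i = q • (f y).2 i := by
        rw [hy, map_nsmul, Prod.smul_snd, Pi.smul_apply]
      rw [this, hq2]
      exact CharTwo.two_nsmul _
    have hinj : Function.Injective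
        (fun v : Fin (k - t) → Fin q =>
          (fun i => Function.surjInv hψ ⟨(f (Φ v)).1 i, htor v i⟩ : Fin g → Fin q)) := by
      intro v v' h
      apply hΦinj; apply hf
      have h1 : (f (Φ v)).1 = (f (Φ v')).1 := by
        funext i
        have := congrFun h i
        have := Function.injective_surjInv hψ this
        exact congrArg Subtype.val this
      exact Prod.ext h1 ((hsnd v).trans (hsnd v').symm)
    have := Fintype.card_le_of_injective _ hinj
    rw [Fintype.card_fun, Fintype.card_fun, Fintype.card_fin, Fintype.card_fin,
      Fintype.card_fin] at this
    exact (Nat.pow_le_pow_iff_right hq).mp this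

lemma nat_aux {n : ℕ} (hn : 2 < n) :
    (∃ p, Nat.Prime p ∧ p ∣ n ∧ p ≠ 2) ∨ 4 ∣ n := by
  by_cases h : ∃ p, Nat.Prime p ∧ p ∣ n ∧ p ≠ 2
  · exact Or.inl h
  push_neg at h
  right
  have h2 : 2 ∣ n := by
    have hp := Nat.minFac_prime (show n ≠ 1 by omega)
    have := h _ hp (Nat.minFac_dvd n)
    rw [← this]; exact Nat.minFac_dvd n
  obtain ⟨c, hc⟩ := h2
  have hc1 : 1 < c := by omega
  have hp := Nat.minFac_prime (show c ≠ 1 by omega)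
  have h2c : c.minFac = 2 := h _ hp (hc ▸ Dvd.dvd.mul_left (Nat.minFac_dvd c) 2)
  have h2dc : 2 ∣ c := h2c ▸ Nat.minFac_dvd c
  obtain ⟨e, he⟩ := h2dc
  exact ⟨e, by omega⟩


/-- If `G ≅ ℤ/d₁ × ⋯ × ℤ/d_k` with `d₁ ∣ d₂ ∣ ⋯ ∣ d_k` and all `d_i > 1`
embeds into `(ℚ/ℤ)^g × (ℤ/2ℤ)^{m−1}`, then either `k ≤ g`, or
`g < k ≤ g + m − 1` and `d₁ = ⋯ = d_{k−g} = 2`. -/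
theorem invariant_factors_of_embedding
    {G : Type} [AddCommGroup G] [Finite G]
    (k g m : ℕ) (d : Fin k → ℕ)
    (hd1 : ∀ i, 1 < d i)
    (hdvd : ∀ i j : Fin k, i ≤ j → d i ∣ d j)
    (e : G ≃+ ∀ i : Fin k, ZMod (d i))
    (f : G →+ (Fin g → AddCircle (1 : ℚ)) × (Fin (m - 1) → ZMod 2))
    (hf : Function.Injective f) :
    k ≤ g ∨ (g < k ∧ k ≤ g + m - 1 ∧ ∀ i : Fin k, (i : ℕ) < k - g → d i = 2) := by
  by_cases hkg : k ≤ g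
  · exact Or.inl hkg
  push_neg at hkg
  have hk0 : 0 < k := by omega
  right
  have step : ∀ (i : Fin k) (q : ℕ), q ∣ d i → ∀ j : Fin k, (i : ℕ) ≤ (j : ℕ) → q ∣ d j :=
    fun i q hq j hij => hq.trans (hdvd i j hij)
  have hodd : ∀ q, Nat.Prime q → q ∣ d ⟨0, hk0⟩ → q = 2 := by
    intro q hqp hqd0
    by_contra hq2
    have hqodd : Odd q := hqp.odd_of_ne_two hq2
    have := (count_le hd1 e f hf q 0 hqp.one_lt
      (fun j _ => step ⟨0, hk0⟩ q hqd0 j (Nat.zero_le _))).1 hqodd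
    omega
  have h2d0 : 2 ∣ d ⟨0, hk0⟩ := by
    have hp := Nat.minFac_prime (show d ⟨0, hk0⟩ ≠ 1 by have := hd1 ⟨0, hk0⟩; omega)
    have := hodd _ hp (Nat.minFac_dvd _)
    rw [← this]; exact Nat.minFac_dvd _
  have hall2 : ∀ j : Fin k, 2 ∣ d j := fun j => step ⟨0, hk0⟩ 2 h2d0 j (Nat.zero_le _)
  have hbound := (count_le hd1 e f hf 2 0 (by norm_num) (fun j _ => hall2 j)).2.1
  refine ⟨hkg, by omega, ?_⟩
  intro i hi
  by_contra hdi
  have h2lt : 2 < d i := by have := hd1 i; omega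
  have hik : (i : ℕ) < k := i.2
  rcases nat_aux h2lt with ⟨q, hqp, hqdi, hq2⟩ | h4
  · have hqodd := hqp.odd_of_ne_two hq2
    have := (count_le hd1 e f hf q (i : ℕ) hqp.one_lt
      (fun j hj => step i q hqdi j hj)).1 hqodd
    omega
  · have := (count_le hd1 e f hf 2 (i : ℕ) (by norm_num)
      (fun j hj => hall2 j)).2.2 rfl
      (fun j hj => (by norm_num : (2 * 2 : ℕ) = 4) ▸ step i 4 h4 j hj)
    omega
end
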